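/- Let (Ω, F, P) be a probability space and A : ℕ × ℕ → F a monotone family of measurable events (n ≤ n' and m' ≤ m imply A(n', m') ⊆ A(n, m)) with A(n, m) = ∅ unless n < m. If K > 0 satisfies E[J_{∞,A}] < K, then φ(λ) := ⌈K/λ⌉ is a uniform learnable rate: for all λ ∈ (0,1) and all naturals a_0 < b_0 ≤ a_1 < b_1 ≤ …, there exists n ≤ ⌈K/λ⌉ with P(A(a_n, b_n)) < λ. -/
import Mathlib


open MeasureTheory ENNReal

/-- `ω` witnesses `k` many "abstract fluctuations" for the family `A`: there are naturals
`a₀ < b₀ ≤ a₁ < b₁ ≤ … ≤ a_{k-1} < b_{k-1}` with `ω ∈ A (a n) (b n)` for all `n < k`. -/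
def HasJ {Ω : Type} (A : ℕ → ℕ → Set Ω) (k : ℕ) (ω : Ω) : Prop :=
  ∃ a b : ℕ → ℕ, (∀ n < k, a n < b n) ∧ (∀ n, n + 1 < k → b n ≤ a (n + 1)) ∧
    ∀ n < k, ω ∈ A (a n) (b n)

/-- The random variable `J_{∞,A}` (with values in `ℝ≥0∞`): the supremum of all `k`
admitting `k` many abstract fluctuations for `A`. -/
noncomputable def JInf {Ω : Type} (A : ℕ → ℕ → Set Ω) (ω : Ω) : ℝ≥0∞ :=
  ⨆ k ∈ {k : ℕ | HasJ A k ω}, (k : ℝ≥0∞)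

lemma hasJ_of_finset {Ω : Type} (A : ℕ → ℕ → Set Ω) (a b : ℕ → ℕ)
    (hab : ∀ n, a n < b n) (hba : ∀ n, b n ≤ a (n + 1)) (ω : Ω)
    (S : Finset ℕ) (hS : ∀ n ∈ S, ω ∈ A (a n) (b n)) :
    HasJ A S.card ω := by
  have ha : StrictMono a :=
    strictMono_nat_of_lt_succ (fun n => lt_of_lt_of_le (hab n) (hba n))
  set k := S.card with hk
  set e := S.orderEmbOfFin hk.symm with he
  refine ⟨fun n => if h : n < k then a (e ⟨n, h⟩) else 0,
          fun n => if h : n < k then b (e ⟨n, h⟩) else 0, ?_, ?_, ?_⟩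
  · intro n hn; simp only [dif_pos hn]; exact hab _
  · intro n hn
    have hn' : n < k := Nat.lt_of_succ_lt hn
    simp only [dif_pos hn, dif_pos hn']
    calc b (e ⟨n, hn'⟩) ≤ a (e ⟨n, hn'⟩ + 1) := hba _
      _ ≤ a (e ⟨n + 1, hn⟩) := by
          refine ha.monotone ?_
          have := e.strictMono (show (⟨n, hn'⟩ : Fin k) < ⟨n + 1, hn⟩ from by
            simp [Fin.mk_lt_mk])
          omega
  · intro n hn
    simp only [dif_pos hn]
    exact hS _ (S.orderEmbOfFin_mem hk.symm _)

theorem stmt8 {Ω : Type} [MeasurableSpace Ω] (μ : Measure Ω) [IsProbabilityMeasure μ]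
    (A : ℕ → ℕ → Set Ω) (hA : ∀ n m, MeasurableSet (A n m))
    (hmono : ∀ n n' m m' : ℕ, n ≤ n' → m' ≤ m → A n' m' ⊆ A n m)
    (hempty : ∀ n m : ℕ, ¬ n < m → A n m = ∅)
    (K : ℝ) (hK : 0 < K)
    (hE : ∫⁻ ω, JInf A ω ∂μ < ENNReal.ofReal K) :
    ∀ lam ∈ Set.Ioo (0 : ℝ) 1, ∀ a b : ℕ → ℕ,
      (∀ n, a n < b n) → (∀ n, b n ≤ a (n + 1)) →
      ∃ n ≤ ⌈K / lam⌉₊, μ (A (a n) (b n)) < ENNReal.ofReal lam := by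
  intro lam hlam a b hab hba
  by_contra hcon
  push_neg at hcon
  set N := ⌈K / lam⌉₊ with hN
  -- pointwise: sum of indicators ≤ JInf
  have hpt : ∀ ω, ∑ n ∈ Finset.range (N + 1),
      (A (a n) (b n)).indicator (1 : Ω → ℝ≥0∞) ω ≤ JInf A ω := by
    intro ω
    classical
    set S := (Finset.range (N + 1)).filter (fun n => ω ∈ A (a n) (b n)) with hSdef
    have hsum : ∑ n ∈ Finset.range (N + 1),
        (A (a n) (b n)).indicator (1 : Ω → ℝ≥0∞) ω = (S.card : ℝ≥0∞) := by
      rw [hSdef, Finset.card_filter]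
      push_cast
      refine Finset.sum_congr rfl (fun n _ => ?_)
      by_cases h : ω ∈ A (a n) (b n) <;> simp [Set.indicator, h]
    rw [hsum]
    have hJ : HasJ A S.card ω := by
      refine hasJ_of_finset A a b hab hba ω S (fun n hn => ?_)
      exact (Finset.mem_filter.mp hn).2
    exact le_iSup₂ (f := fun (k : ℕ) (_ : k ∈ {k : ℕ | HasJ A k ω}) => (k : ℝ≥0∞))
      S.card hJ
  -- integrate
  have hint : ∑ n ∈ Finset.range (N + 1), μ (A (a n) (b n)) ≤ ∫⁻ ω, JInf A ω ∂μ := by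
    calc ∑ n ∈ Finset.range (N + 1), μ (A (a n) (b n))
        = ∑ n ∈ Finset.range (N + 1),
            ∫⁻ ω, (A (a n) (b n)).indicator (1 : Ω → ℝ≥0∞) ω ∂μ := by
          refine Finset.sum_congr rfl (fun n _ => ?_)
          rw [lintegral_indicator_one (hA _ _)]
      _ = ∫⁻ ω, ∑ n ∈ Finset.range (N + 1),
            (A (a n) (b n)).indicator (1 : Ω → ℝ≥0∞) ω ∂μ := by
          rw [lintegral_finset_sum]
          exact fun n _ => measurable_one.indicator (hA _ _)
      _ ≤ ∫⁻ ω, JInf A ω ∂μ := lintegral_mono hpt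
  have hlow : ((N + 1 : ℕ) : ℝ≥0∞) * ENNReal.ofReal lam ≤
      ∑ n ∈ Finset.range (N + 1), μ (A (a n) (b n)) := by
    have := Finset.card_nsmul_le_sum (Finset.range (N + 1))
      (fun n => μ (A (a n) (b n))) (ENNReal.ofReal lam)
      (fun n hn => hcon n (Nat.lt_succ_iff.mp (Finset.mem_range.mp hn)))
    simpa [nsmul_eq_mul] using this
  have hKle : ENNReal.ofReal K < ((N + 1 : ℕ) : ℝ≥0∞) * ENNReal.ofReal lam := by
    have h1 : K ≤ (N : ℝ) * lam := (div_le_iff₀ hlam.1).mp (Nat.le_ceil (K / lam))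
    have h2 : K < ((N : ℝ) + 1) * lam := by nlinarith [hlam.1]
    calc ENNReal.ofReal K < ENNReal.ofReal (((N : ℝ) + 1) * lam) := by
          refine (ENNReal.ofReal_lt_ofReal_iff ?_).mpr h2
          have := hlam.1
          positivity
      _ = ((N + 1 : ℕ) : ℝ≥0∞) * ENNReal.ofReal lam := by
          rw [ENNReal.ofReal_mul (by positivity)]
          congr 1
          rw [← ENNReal.ofReal_natCast (N + 1)]
          push_cast
          ring_nf
  exact absurd (hKle.trans_le (hlow.trans hint)) (not_lt.mpr hE.le)
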